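/- arXiv:1212.5302 — 2 statements merged into one kernel-verified Lean document; each statement's English description precedes it below -/
import Mathlib

section
/- Let (A1,B1,C1,D1) and (A2,B2,C2,D2) be Speh quadruples with A1 < A2, D1 < D2, A2 ≤ D1 + 1, and additionally C1 < A2 and D1 < B2. Then the multisegment MWA(m1 + m2) contains a segment of cardinality (C1 − A1 + 1) + (C2 − A2 + 1), where m_i = m(A_i,B_i,C_i,D_i). -/
/-- A Speh quadruple: integers `A ≤ B`, `A ≤ C` with `A + D = B + C`. -/
def SpehQuad (A B C D : ℤ) : Prop := A ≤ B ∧ A ≤ C ∧ A + D = B + C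

/-- The integer segment (as a finite set) associated to a pair `(b, e)`. -/
noncomputable def segSet (s : ℤ × ℤ) : Finset ℤ := Finset.Icc s.1 s.2

/-- A finite set of integers is a ℤ-segment if it equals `Finset.Icc x y` for some `x ≤ y`. -/
def IsZSegment (S : Finset ℤ) : Prop := ∃ x y : ℤ, x ≤ y ∧ S = Finset.Icc x y

/-- The rectangular multisegment `m(A,B,C,D)`: the segments `[A+j, B+j]` for `j = 0, …, C−A`.
(Here `D = B + C − A` is determined by the other three entries.) -/
def rectMulti (A B C : ℤ) : Multiset (ℤ × ℤ) :=
  (Multiset.range (C - A + 1).toNat).map fun j => (A + (j : ℤ), B + (j : ℤ))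

/-- A multiset of pairs represents a multisegment when each pair `(b,e)` satisfies `b ≤ e`. -/
def ValidMS (a : Multiset (ℤ × ℤ)) : Prop := ∀ s ∈ a, s.1 ≤ s.2

/-- Total number of points of a multisegment (used as fuel for the MW algorithm). -/
def msSize (a : Multiset (ℤ × ℤ)) : ℕ := (a.map fun s => (s.2 + 1 - s.1).toNat).sum

/-- Removing the last element of a segment: `[b,e] ↦ [b,e−1]`, omitted if empty. -/
def truncate (s : ℤ × ℤ) : Multiset (ℤ × ℤ) :=
  if s.1 ≤ s.2 - 1 then {(s.1, s.2 - 1)} else 0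

/-- Maximum of a multiset of integers (default `0` on the empty multiset). -/
def msMaxD (m : Multiset ℤ) : ℤ := WithBot.unbotD 0 m.toFinset.max

/-- The chain of stages of one step of the Mœglin–Waldspurger algorithm.
`chainAux fuel rem b e` looks in `rem` for a segment with end `e` and beginning `< b`,
of maximal beginning; if found, it is removed, its truncation is recorded, and the chain
continues with end `e − 1`.  Returns the number of segments chosen together with the
resulting multisegment (remaining segments plus truncations of chosen ones). -/
def chainAux : ℕ → Multiset (ℤ × ℤ) → ℤ → ℤ → ℕ × Multiset (ℤ × ℤ)
  | 0, rem, _, _ => (0, rem)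
  | n + 1, rem, b, e =>
    let S := rem.filter fun s => s.2 = e ∧ s.1 < b
    if S = 0 then (0, rem)
    else
      let b' := msMaxD (S.map Prod.fst)
      let r := chainAux n (rem.erase (b', e)) b' (e - 1)
      (r.1 + 1, truncate (b', e) + r.2)

/-- One step of the Mœglin–Waldspurger algorithm on a (nonempty) multisegment:
returns the segment `Γ = [x−k+1, x]` and the multisegment `a′`. -/
def mwaStep (a : Multiset (ℤ × ℤ)) : (ℤ × ℤ) × Multiset (ℤ × ℤ) :=
  let x := msMaxD (a.map Prod.snd)
  let b1 := msMaxD ((a.filter fun s => s.2 = x).map Prod.fst)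
  let r := chainAux a.card (a.erase (b1, x)) b1 (x - 1)
  ((x - r.1, x), truncate (b1, x) + r.2)

/-- The Mœglin–Waldspurger algorithm, with fuel. -/
def mwaAux : ℕ → Multiset (ℤ × ℤ) → Multiset (ℤ × ℤ)
  | 0, _ => 0
  | n + 1, a =>
    if a = 0 then 0
    else
      let r := mwaStep a
      r.1 ::ₘ mwaAux n r.2

/-- The Mœglin–Waldspurger algorithm, computing the Zelevinsky dual of a multisegment.
(The fuel `msSize a` suffices: each step strictly decreases the total number of points.) -/
def MWA (a : Multiset (ℤ × ℤ)) : Multiset (ℤ × ℤ) := mwaAux (msSize a) a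

/-- Two segments are linked if their union is a ℤ-segment different from both of them. -/
def Linked (s t : ℤ × ℤ) : Prop :=
  IsZSegment (segSet s ∪ segSet t) ∧ segSet s ∪ segSet t ≠ segSet s ∧
    segSet s ∪ segSet t ≠ segSet t

/-- The intersection of two linked segments, as a multisegment (empty if disjoint). -/
def segInterM (s t : ℤ × ℤ) : Multiset (ℤ × ℤ) :=
  if max s.1 t.1 ≤ min s.2 t.2 then {(max s.1 t.1, min s.2 t.2)} else 0

/-- Elementary linking operation: `Prec c b` holds when `b` contains linked segments
`s, t` and `c` is obtained from `b` by replacing them with `s ∪ t` (and `s ∩ t` if nonempty). -/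
def Prec (c b : Multiset (ℤ × ℤ)) : Prop :=
  ∃ s t rest, b = s ::ₘ t ::ₘ rest ∧ Linked s t ∧
    c = (min s.1 t.1, max s.2 t.2) ::ₘ (segInterM s t + rest)

/-- The linking (strict) order on multisegments. -/
def MLt : Multiset (ℤ × ℤ) → Multiset (ℤ × ℤ) → Prop := Relation.TransGen Prec

/-- Strong ordering of Speh quadruples. -/
def StrongLt (A1 B1 C1 D1 A2 B2 C2 D2 : ℤ) : Prop :=
  A1 < A2 ∧ B1 < B2 ∧ C1 < C2 ∧ D1 < D2

/-- The set `I(A,B,C,D)` attached to a Speh quadruple. -/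
def ISet (A B C D : ℤ) : Set ℤ := {z : ℤ | z ≤ A - 1} ∪ ↑(Finset.Icc (B + 1) (D + 1))

/-- Pattern: integers `i < j < k` with `i, k ∈ I \ J` and `j ∈ J \ I`. -/
def PPat (I J : Set ℤ) : Prop :=
  ∃ i j k : ℤ, i < j ∧ j < k ∧ i ∈ I \ J ∧ j ∈ J \ I ∧ k ∈ I \ J

/-- Reflection of a multisegment: `[b,e] ↦ [−e,−b]`. -/
def reflMS (a : Multiset (ℤ × ℤ)) : Multiset (ℤ × ℤ) := a.map fun s => (-s.2, -s.1)

lemma rect_def (A B C : ℤ) : rectMulti A B C =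
    (Multiset.range (C - A + 1).toNat).map (fun j : ℕ => ((A + (j:ℤ), B + (j:ℤ)) : ℤ × ℤ)) := by
  unfold rectMulti
  simp only [Multiset.pure_def, Multiset.bind_def, Multiset.bind_singleton, Multiset.map_map,
    Function.comp_apply]

lemma rect_zero {A B C : ℤ} (h : C < A) : rectMulti A B C = 0 := by
  rw [rect_def]
  have : (C - A + 1).toNat = 0 := by omega
  simp [this]

lemma rect_cons {A B C : ℤ} (h : A ≤ C) :
    rectMulti A B C = (C, B + (C - A)) ::ₘ rectMulti A B (C - 1) := by
  rw [rect_def, rect_def]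
  have h1 : (C - A + 1).toNat = (C - 1 - A + 1).toNat + 1 := by omega
  have h2 : ((C - 1 - A + 1).toNat : ℤ) = C - A := by omega
  rw [h1, Multiset.range_succ, Multiset.map_cons, h2]
  have h3 : A + (C - A) = C := by ring
  rw [h3]

lemma rect_mem {A B C : ℤ} {s : ℤ × ℤ} (h : s ∈ rectMulti A B C) :
    A ≤ s.1 ∧ s.1 ≤ C ∧ s.2 - s.1 = B - A := by
  rw [rect_def] at h
  simp only [Multiset.mem_map, Multiset.mem_range] at h
  obtain ⟨j, hj, hs⟩ := h
  subst hs
  simp only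
  omega

lemma rect_card {A B C : ℤ} : (rectMulti A B C).card = (C - A + 1).toNat := by
  rw [rect_def]; simp

lemma msMaxD_eq {m : Multiset ℤ} {a : ℤ} (ha : a ∈ m) (h : ∀ b ∈ m, b ≤ a) :
    msMaxD m = a := by
  unfold msMaxD
  have : m.toFinset.max = (a : WithBot ℤ) := by
    apply le_antisymm
    · apply Finset.max_le
      intro b hb
      exact_mod_cast h b (Multiset.mem_toFinset.mp hb)
    · exact Finset.le_max (Multiset.mem_toFinset.mpr ha)
  rw [this]
  rfl

lemma chainAux_zero_rem (fuel : ℕ) (b e : ℤ) : chainAux fuel 0 b e = (0, 0) := by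
  cases fuel <;> simp [chainAux]

lemma chainAux_no_end {fuel : ℕ} {rem : Multiset (ℤ × ℤ)} {b e : ℤ}
    (h : ∀ s ∈ rem, s.2 ≠ e) : chainAux fuel rem b e = (0, rem) := by
  cases fuel with
  | zero => rfl
  | succ n =>
    have hS : rem.filter (fun s => s.2 = e ∧ s.1 < b) = 0 :=
      Multiset.filter_eq_nil.mpr (fun s hs hp => h s hs hp.1)
    simp [chainAux, hS]

lemma chain_rect : ∀ (n : ℕ) (fuel' : ℕ) (A B C b : ℤ) (rest : Multiset (ℤ × ℤ)),
    A ≤ B → A ≤ C → C < b → (C - A + 1).toNat = n →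
    (∀ s ∈ rest, s.2 ≤ B - 1) →
    chainAux (n + fuel') (rectMulti A B C + rest) b (B + (C - A)) =
      ((chainAux fuel' rest A (B - 1)).1 + n,
       (if A ≤ B - 1 then rectMulti A (B - 1) C else 0) + (chainAux fuel' rest A (B - 1)).2) := by
  intro n
  induction n with
  | zero =>
    intro fuel' A B C b rest hAB hAC hb hn hrest
    exact absurd hAC (by omega)
  | succ m ih =>
    intro fuel' A B C b rest hAB hAC hb hn hrest
    set e := B + (C - A) with he
    rw [rect_cons hAC, Multiset.cons_add, ← he]
    have hfuel : m + 1 + fuel' = (m + fuel') + 1 := by omega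
    rw [hfuel]
    have hnil : Multiset.filter (fun s => s.2 = e ∧ s.1 < b)
        (rectMulti A B (C - 1) + rest) = 0 := by
      rw [Multiset.filter_eq_nil]
      intro s hs hp
      rcases Multiset.mem_add.mp hs with h1 | h1
      · have := rect_mem h1
        omega
      · have := hrest s h1
        omega
    have hS : ((((C, e) ::ₘ (rectMulti A B (C - 1) + rest)).filter
        fun s => s.2 = e ∧ s.1 < b)) = {(C, e)} := by
      rw [Multiset.filter_cons_of_pos _ ⟨rfl, hb⟩, hnil]
      rfl
    have hb' : msMaxD (Multiset.map Prod.fst ({(C, e)} : Multiset (ℤ × ℤ))) = C := by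
      simp only [Multiset.map_singleton]
      exact msMaxD_eq (Multiset.mem_singleton_self _)
        (by intro x hx; rw [Multiset.mem_singleton] at hx; omega)
    simp only [chainAux, hS, hb', Multiset.erase_cons_head]
    rw [if_neg (by simp)]
    by_cases hC : A ≤ C - 1
    · have hm : (C - 1 - A + 1).toNat = m := by omega
      have hee : e - 1 = B + (C - 1 - A) := by omega
      rw [hee, ih fuel' A B (C - 1) C rest hAB hC (by omega) hm hrest]
      refine Prod.ext ?_ ?_
      · simp only
        omega
      · simp only
        by_cases hB : A ≤ B - 1
        · rw [if_pos hB, if_pos hB]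
          have ht : truncate (C, e) = {(C, (B - 1) + (C - A))} := by
            unfold truncate
            rw [if_pos (by simp only; omega)]
            have : e - 1 = (B - 1) + (C - A) := by omega
            rw [this]
          rw [ht, rect_cons hAC, ← Multiset.singleton_add, add_assoc]
        · rw [if_neg hB, if_neg hB]
          have ht : truncate (C, e) = 0 := by
            unfold truncate
            rw [if_neg (by simp only; omega)]
          rw [ht]
          simp
    · have hCA : C = A := by omega
      subst hCA
      have hm : m = 0 := by omega
      subst hm
      rw [rect_zero (by omega)]
      simp only [zero_add]
      have hee : e - 1 = B - 1 := by omega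
      rw [hee]
      refine Prod.ext ?_ ?_
      · simp only
      · simp only
        by_cases hB : C ≤ B - 1
        · rw [if_pos hB]
          have ht : truncate (C, e) = {(C, B - 1)} := by
            unfold truncate
            rw [if_pos (by simp only; omega)]
            have : e - 1 = B - 1 := by omega
            rw [this]
          have hr : rectMulti C (B - 1) C = {(C, B - 1)} := by
            rw [rect_cons le_rfl, rect_zero (by omega)]
            have : (B - 1) + (C - C) = B - 1 := by ring
            rw [this]
            rfl
          rw [ht, hr]
        · rw [if_neg hB]
          have ht : truncate (C, e) = 0 := by
            unfold truncate
            rw [if_neg (by simp only; omega)]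
          rw [ht]

lemma step_rect (m1 : Multiset (ℤ × ℤ)) (A2 B2 C2 : ℤ) (hAB : A2 ≤ B2) (hAC : A2 ≤ C2)
    (hm1 : ∀ s ∈ m1, s.2 ≤ B2 - 1) :
    mwaStep (m1 + rectMulti A2 B2 C2) =
      ((B2 - ((chainAux (Multiset.card m1 + 1) m1 A2 (B2 - 1)).1 : ℤ), B2 + (C2 - A2)),
       (if A2 ≤ B2 - 1 then rectMulti A2 (B2 - 1) C2 else 0) +
         (chainAux (Multiset.card m1 + 1) m1 A2 (B2 - 1)).2) := by
  set D2 := B2 + (C2 - A2) with hD2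
  have hsplit : m1 + rectMulti A2 B2 C2 = (C2, D2) ::ₘ (m1 + rectMulti A2 B2 (C2 - 1)) := by
    rw [rect_cons hAC, Multiset.add_cons]
  have hmem1 : ∀ s ∈ m1 + rectMulti A2 B2 (C2 - 1), s.2 < D2 := by
    intro s hs
    rcases Multiset.mem_add.mp hs with h1 | h1
    · have := hm1 s h1; omega
    · have := rect_mem h1; omega
  have hx : msMaxD (Multiset.map Prod.snd (m1 + rectMulti A2 B2 C2)) = D2 := by
    apply msMaxD_eq
    · rw [hsplit]
      exact Multiset.mem_map_of_mem _ (Multiset.mem_cons_self _ _)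
    · intro y hy
      rw [Multiset.mem_map] at hy
      obtain ⟨s, hs, rfl⟩ := hy
      rw [hsplit, Multiset.mem_cons] at hs
      rcases hs with rfl | hs
      · exact le_refl _
      · exact le_of_lt (hmem1 s hs)
  have hfil : Multiset.filter (fun s => s.2 = D2) (m1 + rectMulti A2 B2 C2) = {(C2, D2)} := by
    rw [hsplit, Multiset.filter_cons_of_pos (p := fun s : ℤ × ℤ => s.2 = D2) _ rfl,
      Multiset.filter_eq_nil.mpr]
    · rfl
    · intro s hs hp
      exact absurd hp (by have := hmem1 s hs; omega)
  have hb1 : msMaxD (Multiset.map Prod.fst ({(C2, D2)} : Multiset (ℤ × ℤ))) = C2 := by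
    simp only [Multiset.map_singleton]
    exact msMaxD_eq (Multiset.mem_singleton_self _)
      (by intro x hx; rw [Multiset.mem_singleton] at hx; omega)
  have herase : (m1 + rectMulti A2 B2 C2).erase (C2, D2) = rectMulti A2 B2 (C2 - 1) + m1 := by
    rw [hsplit, Multiset.erase_cons_head, add_comm]
  simp only [mwaStep]
  rw [hx, hfil, hb1, herase]
  by_cases hC : A2 ≤ C2 - 1
  · have hcard : Multiset.card (m1 + rectMulti A2 B2 C2)
        = (C2 - 1 - A2 + 1).toNat + (Multiset.card m1 + 1) := by
      rw [Multiset.card_add, rect_card]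
      omega
    have hee : D2 - 1 = B2 + (C2 - 1 - A2) := by omega
    rw [hcard, hee, chain_rect _ _ A2 B2 (C2 - 1) C2 m1 hAB hC (by omega) rfl hm1]
    refine Prod.ext ?_ ?_
    · simp only
      refine Prod.ext ?_ ?_
      · simp only
        push_cast
        omega
      · rfl
    · simp only
      by_cases hB : A2 ≤ B2 - 1
      · rw [if_pos hB, if_pos hB]
        have ht : truncate (C2, D2) = {(C2, (B2 - 1) + (C2 - A2))} := by
          unfold truncate
          rw [if_pos (by simp only; omega)]
          have : D2 - 1 = (B2 - 1) + (C2 - A2) := by omega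
          rw [this]
        rw [ht, rect_cons hAC, ← Multiset.singleton_add, add_assoc]
      · rw [if_neg hB, if_neg hB]
        have ht : truncate (C2, D2) = 0 := by
          unfold truncate
          rw [if_neg (by simp only; omega)]
        rw [ht]
        simp
  · have hCA : C2 = A2 := by omega
    subst hCA
    have h1 : rectMulti C2 B2 (C2 - 1) + m1 = m1 := by
      rw [rect_zero (by omega), zero_add]
    have h2 : Multiset.card (m1 + rectMulti C2 B2 C2) = Multiset.card m1 + 1 := by
      rw [Multiset.card_add, rect_card]
      omega
    have h3 : D2 - 1 = B2 - 1 := by omega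
    have h4 : D2 = B2 := by omega
    rw [h1, h2, h3]
    refine Prod.ext ?_ ?_
    · simp only
      refine Prod.ext ?_ ?_
      · simp only
        omega
      · rfl
    · simp only
      by_cases hB : C2 ≤ B2 - 1
      · rw [if_pos hB]
        have ht : truncate (C2, D2) = {(C2, B2 - 1)} := by
          unfold truncate
          rw [if_pos (by simp only; omega)]
          have : D2 - 1 = B2 - 1 := by omega
          rw [this]
        have hr : rectMulti C2 (B2 - 1) C2 = {(C2, B2 - 1)} := by
          rw [rect_cons le_rfl, rect_zero (by omega)]
          have : (B2 - 1) + (C2 - C2) = B2 - 1 := by ring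
          rw [this]
          rfl
        rw [ht, hr]
      · rw [if_neg hB]
        have ht : truncate (C2, D2) = 0 := by
          unfold truncate
          rw [if_neg (by simp only; omega)]
        rw [ht]

lemma msSize_add (a b : Multiset (ℤ × ℤ)) : msSize (a + b) = msSize a + msSize b := by
  simp [msSize]

lemma msSize_rect (A B C : ℤ) :
    msSize (rectMulti A B C) = (C - A + 1).toNat * (B + 1 - A).toNat := by
  rw [rect_def]
  unfold msSize
  rw [Multiset.map_map]
  have h : ((fun s : ℤ × ℤ => (s.2 + 1 - s.1).toNat) ∘ fun j : ℕ =>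
      ((A + (j : ℤ), B + (j : ℤ)) : ℤ × ℤ)) = fun _ : ℕ => (B + 1 - A).toNat := by
    funext j
    simp only [Function.comp_apply]
    omega
  rw [h, Multiset.map_const', Multiset.sum_replicate, Multiset.card_range, smul_eq_mul]

lemma main_ind (A1 B1 C1 D1 A2 C2 : ℤ)
    (h1 : SpehQuad A1 B1 C1 D1) (hD1 : A1 + D1 = B1 + C1) (hAC2 : A2 ≤ C2)
    (hCA : C1 < A2) (hAD : A2 ≤ D1 + 1) :
    ∀ (n : ℕ) (B2' : ℤ) (f : ℕ), D1 + 1 ≤ B2' → (B2' - D1 - 1).toNat = n → n + 1 ≤ f →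
    ∃ s ∈ mwaAux f (rectMulti A1 B1 C1 + rectMulti A2 B2' C2),
      s.2 - s.1 + 1 = (C1 - A1 + 1) + (C2 - A2 + 1) := by
  obtain ⟨hAB1, hAC1, -⟩ := h1
  intro n
  induction n with
  | zero =>
    intro B2' f hB2 hn hf
    have hB2' : B2' = D1 + 1 := by omega
    obtain ⟨g, rfl⟩ : ∃ g, f = g + 1 := ⟨f - 1, by omega⟩
    have hne : rectMulti A1 B1 C1 + rectMulti A2 B2' C2 ≠ 0 := by
      rw [rect_cons hAC2, Multiset.add_cons]
      exact Multiset.cons_ne_zero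
    have hm1e : ∀ s ∈ rectMulti A1 B1 C1, s.2 ≤ B2' - 1 := by
      intro s hs
      have := rect_mem hs
      omega
    have hstep := step_rect (rectMulti A1 B1 C1) A2 B2' C2 (by omega) hAC2 hm1e
    have hr1 : (chainAux (Multiset.card (rectMulti A1 B1 C1) + 1)
        (rectMulti A1 B1 C1) A2 (B2' - 1)).1 = (C1 - A1 + 1).toNat := by
      have e1 : B2' - 1 = B1 + (C1 - A1) := by omega
      have e2 : Multiset.card (rectMulti A1 B1 C1) = (C1 - A1 + 1).toNat := rect_card
      rw [e2, e1]
      have e3 : rectMulti A1 B1 C1 = rectMulti A1 B1 C1 + 0 := (add_zero _).symm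
      rw [e3, chain_rect _ 1 A1 B1 C1 A2 0 hAB1 hAC1 hCA rfl
        (by intro s hs; exact absurd hs (Multiset.notMem_zero s))]
      rw [chainAux_zero_rem]
      simp
    simp only [mwaAux]
    rw [if_neg hne, hstep]
    refine ⟨_, Multiset.mem_cons_self _ _, ?_⟩
    simp only
    rw [hr1]
    have : ((C1 - A1 + 1).toNat : ℤ) = C1 - A1 + 1 := by omega
    rw [this]
    ring
  | succ m ih =>
    intro B2' f hB2 hn hf
    obtain ⟨g, rfl⟩ : ∃ g, f = g + 1 := ⟨f - 1, by omega⟩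
    have hne : rectMulti A1 B1 C1 + rectMulti A2 B2' C2 ≠ 0 := by
      rw [rect_cons hAC2, Multiset.add_cons]
      exact Multiset.cons_ne_zero
    have hm1e : ∀ s ∈ rectMulti A1 B1 C1, s.2 ≤ B2' - 1 := by
      intro s hs
      have := rect_mem hs
      omega
    have hstep := step_rect (rectMulti A1 B1 C1) A2 B2' C2 (by omega) hAC2 hm1e
    have hr : chainAux (Multiset.card (rectMulti A1 B1 C1) + 1)
        (rectMulti A1 B1 C1) A2 (B2' - 1) = (0, rectMulti A1 B1 C1) := by
      apply chainAux_no_end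
      intro s hs
      have := rect_mem hs
      omega
    rw [hr] at hstep
    simp only [mwaAux]
    rw [if_neg hne, hstep]
    simp only
    rw [if_pos (by omega : A2 ≤ B2' - 1), add_comm (rectMulti A2 (B2' - 1) C2)]
    obtain ⟨s, hs, hlen⟩ := ih (B2' - 1) g (by omega) (by omega) (by omega)
    exact ⟨s, Multiset.mem_cons_of_mem hs, hlen⟩

theorem mwa_long_segment_of_separated
    (A1 B1 C1 D1 A2 B2 C2 D2 : ℤ)
    (h1 : SpehQuad A1 B1 C1 D1) (h2 : SpehQuad A2 B2 C2 D2)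
    (hA : A1 < A2) (hD : D1 < D2) (hAD : A2 ≤ D1 + 1)
    (hCA : C1 < A2) (hDB : D1 < B2) :
    ∃ s ∈ MWA (rectMulti A1 B1 C1 + rectMulti A2 B2 C2),
      s.2 - s.1 + 1 = (C1 - A1 + 1) + (C2 - A2 + 1) := by

  obtain ⟨hAB2, hAC2, hEq2⟩ := h2
  have hbound : (B2 - D1 - 1).toNat + 1 ≤
      msSize (rectMulti A1 B1 C1 + rectMulti A2 B2 C2) := by
    rw [msSize_add, msSize_rect A2 B2 C2]
    have h0 : 0 < (C2 - A2 + 1).toNat := by omega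
    have hle : (B2 + 1 - A2).toNat ≤ (C2 - A2 + 1).toNat * (B2 + 1 - A2).toNat :=
      Nat.le_mul_of_pos_left _ h0
    omega
  unfold MWA
  exact main_ind A1 B1 C1 D1 A2 C2 h1 h1.2.2 hAC2 hCA hAD (B2 - D1 - 1).toNat B2
    (msSize (rectMulti A1 B1 C1 + rectMulti A2 B2 C2)) (by omega) rfl hbound
end

section
/- Let (A,B,C,D) be a Speh quadruple and let a = m(A,B,C,D) be the associated rectangular multisegment. If c is a multisegment with c < a in the linking order, then it is not the case that MWA(c) < MWA(a). -/
section Aux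

open Multiset

lemma msMaxD_mem {m : Multiset ℤ} (h : m ≠ 0) : msMaxD m ∈ m := by
  have hne : m.toFinset.Nonempty := by
    obtain ⟨a, ha⟩ := Multiset.exists_mem_of_ne_zero h
    exact ⟨a, Multiset.mem_toFinset.2 ha⟩
  have hmax : msMaxD m = m.toFinset.max' hne := by
    rw [msMaxD, ← Finset.coe_max' hne]; rfl
  rw [hmax]
  exact Multiset.mem_toFinset.1 (Finset.max'_mem _ hne)

lemma le_msMaxD {m : Multiset ℤ} {a : ℤ} (ha : a ∈ m) : a ≤ msMaxD m := by
  have hne : m.toFinset.Nonempty := ⟨a, Multiset.mem_toFinset.2 ha⟩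
  have hmax : msMaxD m = m.toFinset.max' hne := by
    rw [msMaxD, ← Finset.coe_max' hne]; rfl
  rw [hmax]
  exact Finset.le_max' _ a (Multiset.mem_toFinset.2 ha)

lemma msMaxD_eq_s10 {m : Multiset ℤ} {v : ℤ} (hv : v ∈ m) (hub : ∀ w ∈ m, w ≤ v) :
    msMaxD m = v :=
  le_antisymm (hub _ (msMaxD_mem (by rintro rfl; simp at hv))) (le_msMaxD hv)

lemma msMaxD_singleton (v : ℤ) : msMaxD {v} = v :=
  msMaxD_eq_s10 (by simp) (by simp)

/-- The key invariant: all beginnings lie in `[A, C]`. -/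
def InvB (A C : ℤ) (m : Multiset (ℤ × ℤ)) : Prop := ∀ s ∈ m, A ≤ s.1 ∧ s.1 ≤ C

lemma invB_of_le {A C : ℤ} {m m' : Multiset (ℤ × ℤ)} (h : m' ≤ m) (hm : InvB A C m) :
    InvB A C m' := fun s hs => hm s (Multiset.subset_of_le h hs)

lemma chainAux_succ (n : ℕ) (rem : Multiset (ℤ × ℤ)) (b e : ℤ) :
    chainAux (n+1) rem b e =
      (let S := rem.filter fun s => s.2 = e ∧ s.1 < b
      if S = 0 then (0, rem)
      else
        let b' := msMaxD (S.map Prod.fst)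
        let r := chainAux n (rem.erase (b', e)) b' (e - 1)
        (r.1 + 1, truncate (b', e) + r.2)) := rfl

lemma chainAux_count {A C : ℤ} :
    ∀ (n : ℕ) (rem : Multiset (ℤ × ℤ)) (b e : ℤ), InvB A C rem →
      (chainAux n rem b e).1 = 0 ∨ ((chainAux n rem b e).1 : ℤ) ≤ b - A := by
  intro n
  induction n with
  | zero => intro rem b e _; left; rfl
  | succ n ih =>
    intro rem b e hrem
    rw [chainAux_succ]
    by_cases hS : rem.filter (fun s => s.2 = e ∧ s.1 < b) = 0
    · left; simp [hS]
    · simp only [hS, if_neg, ite_false]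
      set S := rem.filter (fun s => s.2 = e ∧ s.1 < b) with hSdef
      set b' := msMaxD (S.map Prod.fst) with hb'
      have hb'mem : b' ∈ S.map Prod.fst := msMaxD_mem (by
        intro h0; exact hS (Multiset.map_eq_zero.1 h0))
      obtain ⟨t, htS, htb⟩ := Multiset.mem_map.1 hb'mem
      have htrem : t ∈ rem := Multiset.mem_of_mem_filter htS
      have htp := Multiset.of_mem_filter htS
      have hAb' : A ≤ b' := htb ▸ (hrem t htrem).1
      have hb'b : b' < b := htb ▸ htp.2
      have hInv' : InvB A C (rem.erase (b', e)) := invB_of_le (Multiset.erase_le _ _) hrem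
      rcases ih (rem.erase (b', e)) b' (e - 1) hInv' with h0 | hle
      · right; simp only [h0]; push_cast; omega
      · right; push_cast; push_cast at hle; omega

lemma chainAux_invB {A C : ℤ} :
    ∀ (n : ℕ) (rem : Multiset (ℤ × ℤ)) (b e : ℤ), InvB A C rem →
      InvB A C (chainAux n rem b e).2 := by
  intro n
  induction n with
  | zero => intro rem b e hrem; exact hrem
  | succ n ih =>
    intro rem b e hrem
    rw [chainAux_succ]
    by_cases hS : rem.filter (fun s => s.2 = e ∧ s.1 < b) = 0
    · simp only [hS, if_pos]; exact hrem
    · simp only [hS, if_neg, ite_false]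
      set S := rem.filter (fun s => s.2 = e ∧ s.1 < b) with hSdef
      set b' := msMaxD (S.map Prod.fst) with hb'
      have hb'mem : b' ∈ S.map Prod.fst := msMaxD_mem (by
        intro h0; exact hS (Multiset.map_eq_zero.1 h0))
      obtain ⟨t, htS, htb⟩ := Multiset.mem_map.1 hb'mem
      have htrem : t ∈ rem := Multiset.mem_of_mem_filter htS
      have hb'AC : A ≤ b' ∧ b' ≤ C := htb ▸ hrem t htrem
      intro s hs
      rcases Multiset.mem_add.1 hs with hs1 | hs2
      · unfold truncate at hs1
        split at hs1
        · rw [Multiset.mem_singleton.1 hs1]; exact hb'AC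
        · simp at hs1
      · exact ih (rem.erase (b', e)) b' (e - 1)
          (invB_of_le (Multiset.erase_le _ _) hrem) s hs2

lemma mwaStep_def (m : Multiset (ℤ × ℤ)) : mwaStep m =
    (let x := msMaxD (m.map Prod.snd)
     let b1 := msMaxD ((m.filter fun s => s.2 = x).map Prod.fst)
     let r := chainAux (Multiset.card m) (m.erase (b1, x)) b1 (x - 1)
     ((x - r.1, x), truncate (b1, x) + r.2)) := rfl

lemma mwaAux_succ (n : ℕ) (m : Multiset (ℤ × ℤ)) :
    mwaAux (n+1) m = if m = 0 then 0 else (mwaStep m).1 ::ₘ mwaAux n (mwaStep m).2 := rfl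

lemma mwaAux_zero_arg (n : ℕ) : mwaAux n 0 = 0 := by
  cases n with
  | zero => rfl
  | succ n => rw [mwaAux_succ]; simp

lemma b1_mem {m : Multiset (ℤ × ℤ)} (hm : m ≠ 0) :
    ∃ t ∈ m, t.1 = msMaxD ((m.filter fun s => s.2 = msMaxD (m.map Prod.snd)).map Prod.fst)
      ∧ t.2 = msMaxD (m.map Prod.snd) := by
  set x := msMaxD (m.map Prod.snd) with hx
  have hxmem : x ∈ m.map Prod.snd := msMaxD_mem (by
    intro h0; exact hm (Multiset.map_eq_zero.1 h0))
  obtain ⟨t0, ht0, ht0x⟩ := Multiset.mem_map.1 hxmem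
  have hfil : (m.filter fun s => s.2 = x) ≠ 0 := by
    intro h0
    have : t0 ∈ m.filter fun s => s.2 = x := Multiset.mem_filter.2 ⟨ht0, ht0x⟩
    rw [h0] at this; simp at this
  have hb1mem : msMaxD ((m.filter fun s => s.2 = x).map Prod.fst)
      ∈ (m.filter fun s => s.2 = x).map Prod.fst := msMaxD_mem (by
    intro h0; exact hfil (Multiset.map_eq_zero.1 h0))
  obtain ⟨t, htf, htb⟩ := Multiset.mem_map.1 hb1mem
  have ht2 := Multiset.of_mem_filter htf
  exact ⟨t, Multiset.mem_of_mem_filter htf, htb, ht2⟩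

/-- Every segment output by the MW algorithm on a multisegment whose beginnings all
lie in `[A,C]` has length at most `C - A`. -/
lemma mwaAux_len {A C : ℤ} (hAC : A ≤ C) :
    ∀ (n : ℕ) (m : Multiset (ℤ × ℤ)), InvB A C m →
      ∀ s ∈ mwaAux n m, s.2 - s.1 ≤ C - A := by
  intro n
  induction n with
  | zero => intro m _ s hs; simp [mwaAux] at hs
  | succ n ih =>
    intro m hm s hs
    rw [mwaAux_succ] at hs
    by_cases hm0 : m = 0
    · rw [if_pos hm0] at hs; simp at hs
    · rw [if_neg hm0] at hs
      obtain ⟨t, htm, htb, hte⟩ := b1_mem hm0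
      set x := msMaxD (m.map Prod.snd) with hx
      set b1 := msMaxD ((m.filter fun s => s.2 = x).map Prod.fst) with hb1
      have hb1AC : A ≤ b1 ∧ b1 ≤ C := htb ▸ hm t htm
      have hInvE : InvB A C (m.erase (b1, x)) := invB_of_le (Multiset.erase_le _ _) hm
      rcases Multiset.mem_cons.1 hs with hs1 | hs2
      · -- s is the new segment Γ
        have hsval : s = ((x - ((chainAux (Multiset.card m) (m.erase (b1, x)) b1 (x-1)).1 : ℤ), x)) := by
          rw [hs1, mwaStep_def]
        rcases chainAux_count (A := A) (C := C) (Multiset.card m) (m.erase (b1, x)) b1 (x-1) hInvE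
          with h0 | hle
        · rw [hsval]; simp [h0]; omega
        · rw [hsval]; simp only []; omega
      · -- s comes from the recursive call
        refine ih (mwaStep m).2 ?_ s hs2
        rw [mwaStep_def]
        intro u hu
        rcases Multiset.mem_add.1 hu with hu1 | hu2
        · unfold truncate at hu1
          split at hu1
          · rw [Multiset.mem_singleton.1 hu1]; exact hb1AC
          · simp at hu1
        · exact chainAux_invB (Multiset.card m) (m.erase (b1, x)) b1 (x-1) hInvE u hu2

/-- `Prec` preserves the invariant. -/
lemma prec_invB {A C : ℤ} {c b : Multiset (ℤ × ℤ)} (h : Prec c b) (hb : InvB A C b) :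
    InvB A C c := by
  obtain ⟨s, t, rest, hbEq, _, hcEq⟩ := h
  have hsAC : A ≤ s.1 ∧ s.1 ≤ C := hb s (hbEq ▸ Multiset.mem_cons_self _ _)
  have htAC : A ≤ t.1 ∧ t.1 ≤ C := hb t
    (hbEq ▸ Multiset.mem_cons_of_mem (Multiset.mem_cons_self _ _))
  subst hcEq
  intro u hu
  rcases Multiset.mem_cons.1 hu with hu1 | hu2
  · rw [hu1]
    constructor
    · exact le_min hsAC.1 htAC.1
    · exact le_trans (min_le_left _ _) hsAC.2
  · rcases Multiset.mem_add.1 hu2 with hu3 | hu4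
    · unfold segInterM at hu3
      split at hu3
      · rw [Multiset.mem_singleton.1 hu3]
        exact ⟨le_trans hsAC.1 (le_max_left _ _), max_le hsAC.2 htAC.2⟩
      · simp at hu3
    · exact hb u (hbEq ▸ Multiset.mem_cons_of_mem
        (Multiset.mem_cons_of_mem hu4))

lemma mlt_invB {A C : ℤ} {c b : Multiset (ℤ × ℤ)} (h : MLt c b) (hb : InvB A C b) :
    InvB A C c := by
  induction h with
  | single h1 => exact prec_invB h1 hb
  | tail _ h2 ih => exact ih (prec_invB h2 hb)

/-- A long segment survives downward along `Prec`. -/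
lemma prec_exists_long {k : ℤ} {c b : Multiset (ℤ × ℤ)} (h : Prec c b)
    (hb : ∃ s ∈ b, k ≤ s.2 - s.1) : ∃ s ∈ c, k ≤ s.2 - s.1 := by
  obtain ⟨s, t, rest, hbEq, _, hcEq⟩ := h
  obtain ⟨w, hw, hwk⟩ := hb
  rw [hbEq] at hw
  have hu : (min s.1 t.1, max s.2 t.2) ∈ c := hcEq ▸ Multiset.mem_cons_self _ _
  rcases Multiset.mem_cons.1 hw with hw1 | hw2
  · refine ⟨_, hu, ?_⟩
    subst hw1
    have h1 : min w.1 t.1 ≤ w.1 := min_le_left _ _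
    have h2 : w.2 ≤ max w.2 t.2 := le_max_left _ _
    simp only []; omega
  · rcases Multiset.mem_cons.1 hw2 with hw3 | hw4
    · refine ⟨_, hu, ?_⟩
      subst hw3
      have h1 : min s.1 w.1 ≤ w.1 := min_le_right _ _
      have h2 : w.2 ≤ max s.2 w.2 := le_max_right _ _
      simp only []; omega
    · exact ⟨w, hcEq ▸ Multiset.mem_cons_of_mem (Multiset.mem_add.2 (Or.inr hw4)), hwk⟩

lemma mlt_exists_long {k : ℤ} {c b : Multiset (ℤ × ℤ)} (h : MLt c b)
    (hb : ∃ s ∈ b, k ≤ s.2 - s.1) : ∃ s ∈ c, k ≤ s.2 - s.1 := by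
  induction h with
  | single h1 => exact prec_exists_long h1 hb
  | tail _ h2 ih => exact ih (prec_exists_long h2 hb)

lemma rect_invB {A B C : ℤ} (hAC : A ≤ C) : InvB A C (rectMulti A B C) := by
  intro s hs
  simp only [rectMulti, Multiset.mem_map] at hs
  obtain ⟨j, hj, rfl⟩ := hs
  obtain ⟨a, ha, rfl⟩ := by simpa using hj
  constructor <;> simp <;> omega

end Aux


section RectComp

open Multiset

/-- Normal form of `rectMulti` as a map over `Multiset.range` with a `ℕ` variable. -/
def rectN (A B : ℤ) (p : ℕ) : Multiset (ℤ × ℤ) :=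
  (Multiset.range p).map (fun j : ℕ => (A + (j : ℤ), B + (j : ℤ)))

lemma rectMulti_eq (A B C : ℤ) : rectMulti A B C = rectN A B (C - A + 1).toNat := by
  rw [rectMulti, rectN]; ext s; simp

lemma rectN_succ (A B : ℤ) (p : ℕ) :
    rectN A B (p + 1) = (A + (p : ℤ), B + (p : ℤ)) ::ₘ rectN A B p := by
  rw [rectN, Multiset.range_succ, Multiset.map_cons]; rfl

lemma card_rectN (A B : ℤ) (p : ℕ) : Multiset.card (rectN A B p) = p := by
  rw [rectN]; simp

lemma filter_rectN {A B : ℤ} {p : ℕ} {P : ℤ × ℤ → Prop} [DecidablePred P]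
    (hP : ∀ j : ℕ, j < p + 1 → (P (A + (j : ℤ), B + (j : ℤ)) ↔ j = p)) :
    (rectN A B (p + 1)).filter P = {(A + (p : ℤ), B + (p : ℤ))} := by
  rw [rectN, Multiset.filter_map]
  have h1 : (Multiset.range (p + 1)).filter
      ((fun j : ℕ => P (A + (j : ℤ), B + (j : ℤ)))) =
      (Multiset.range (p + 1)).filter (· = p) := by
    apply Multiset.filter_congr
    intro j hj
    exact hP j (Multiset.mem_range.1 hj)
  have h2 : (Multiset.range (p + 1)).filter (· = p) = {p} := by
    rw [Multiset.filter_eq', Multiset.range_succ, Multiset.count_cons_self,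
      Multiset.count_eq_zero.2 Multiset.notMem_range_self]
    rfl
  calc Multiset.map (fun j : ℕ => (A + (j : ℤ), B + (j : ℤ)))
        (Multiset.filter ((fun s => P s) ∘ fun j : ℕ => (A + (j : ℤ), B + (j : ℤ)))
          (Multiset.range (p + 1)))
      = Multiset.map (fun j : ℕ => (A + (j : ℤ), B + (j : ℤ))) {p} := by rw [← h2, ← h1]; rfl
    _ = {(A + (p : ℤ), B + (p : ℤ))} := by rfl

lemma erase_rectN (A B : ℤ) (p : ℕ) :
    (rectN A B (p + 1)).erase (A + (p : ℤ), B + (p : ℤ)) = rectN A B p := by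
  rw [rectN_succ, Multiset.erase_cons_head]

lemma chain_rect_s10 (A B : ℤ) :
    ∀ (p fuel : ℕ), p ≤ fuel →
      chainAux fuel (rectN A B p) (A + (p : ℤ)) (B + (p : ℤ) - 1) =
        (p, if A ≤ B - 1 then rectN A (B - 1) p else 0) := by
  intro p
  induction p with
  | zero =>
    intro fuel _
    have h0 : rectN A B 0 = 0 := rfl
    rw [h0]
    cases fuel with
    | zero => simp [chainAux, rectN]
    | succ g => rw [chainAux_succ]; simp [rectN]
  | succ p ih =>
    intro fuel hf
    cases fuel with
    | zero => omega
    | succ g =>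
      rw [chainAux_succ]
      have hfil : (rectN A B (p + 1)).filter
          (fun s => s.2 = B + ((p : ℤ) + 1) - 1 ∧ s.1 < A + ((p : ℤ) + 1)) =
          {(A + (p : ℤ), B + (p : ℤ))} := by
        apply filter_rectN
        intro j hj
        constructor
        · rintro ⟨h1, h2⟩
          have : (j : ℤ) = (p : ℤ) := by omega
          exact_mod_cast this
        · rintro rfl; constructor <;> push_cast <;> omega
      have hpc : (((p : ℕ) + 1 : ℕ) : ℤ) = (p : ℤ) + 1 := by push_cast; ring
      rw [hpc] at *
      simp only [hfil]
      have hne : ({(A + (p : ℤ), B + (p : ℤ))} : Multiset (ℤ × ℤ)) ≠ 0 := by simp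
      rw [if_neg hne]
      have hb' : msMaxD (({(A + (p : ℤ), B + (p : ℤ))} : Multiset (ℤ × ℤ)).map Prod.fst)
          = A + (p : ℤ) := by
        rw [Multiset.map_singleton]; exact msMaxD_singleton _
      simp only [hb']
      have he1 : B + ((p : ℤ) + 1) - 1 = B + (p : ℤ) := by ring
      rw [he1]
      rw [erase_rectN]
      have he2 : B + (p : ℤ) - 1 = B + (p : ℤ) - 1 := rfl
      rw [ih g (by omega)]
      have htr : truncate (A + (p : ℤ), B + (p : ℤ)) =
          if A ≤ B - 1 then ({(A + (p : ℤ), B - 1 + (p : ℤ))} : Multiset (ℤ × ℤ)) else 0 := by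
        have hpair : ((A + (p : ℤ), B + (p : ℤ) - 1) : ℤ × ℤ) = (A + (p : ℤ), B - 1 + (p : ℤ)) := by
          rw [Prod.mk.injEq]; omega
        unfold truncate
        by_cases hAB : A ≤ B - 1
        · rw [if_pos (by simp; omega), hpair, if_pos hAB]
        · rw [if_neg (by simp; omega), if_neg hAB]
      rw [htr]
      by_cases hAB : A ≤ B - 1
      · rw [if_pos hAB, if_pos hAB, if_pos hAB]
        rw [Multiset.singleton_add, ← rectN_succ]
      · rw [if_neg hAB, if_neg hAB, if_neg hAB]
        simp

lemma mwaStep_spec {m : Multiset (ℤ × ℤ)} {x b1 : ℤ} {k : ℕ} {res : Multiset (ℤ × ℤ)}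
    (hx : msMaxD (m.map Prod.snd) = x)
    (hb1 : msMaxD ((m.filter fun s => s.2 = x).map Prod.fst) = b1)
    (hch : chainAux (Multiset.card m) (m.erase (b1, x)) b1 (x - 1) = (k, res)) :
    mwaStep m = ((x - (k : ℤ), x), truncate (b1, x) + res) := by
  subst hx; subst hb1
  rw [mwaStep_def]
  simp only [hch]

lemma mwaStep_rect {A B C : ℤ} (hAB : A ≤ B) (hAC : A ≤ C) :
    mwaStep (rectMulti A B C) =
      ((B, B + C - A), if A ≤ B - 1 then rectMulti A (B - 1) C else 0) := by
  set N := (C - A).toNat with hNdef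
  have hN : (C - A + 1).toNat = N + 1 := by omega
  have hNC : (N : ℤ) = C - A := by omega
  rw [rectMulti_eq, hN]
  have hx : msMaxD ((rectN A B (N + 1)).map Prod.snd) = B + (N : ℤ) := by
    apply msMaxD_eq_s10
    · rw [rectN]
      rw [Multiset.map_map]
      exact Multiset.mem_map.2 ⟨N, Multiset.self_mem_range_succ N, rfl⟩
    · intro w hw
      rw [rectN, Multiset.map_map] at hw
      obtain ⟨j, hj, rfl⟩ := Multiset.mem_map.1 hw
      rw [Multiset.mem_range] at hj
      simp only [Function.comp]
      have : (j : ℤ) ≤ (N : ℤ) := by exact_mod_cast Nat.lt_succ_iff.1 hj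
      omega
  have hfil : (rectN A B (N + 1)).filter (fun s => s.2 = B + (N : ℤ)) =
      {(A + (N : ℤ), B + (N : ℤ))} := by
    apply filter_rectN
    intro j hj
    constructor
    · intro h1
      have : (j : ℤ) = (N : ℤ) := by omega
      exact_mod_cast this
    · rintro rfl; rfl
  have hb1 : msMaxD (((rectN A B (N + 1)).filter (fun s => s.2 = B + (N : ℤ))).map Prod.fst)
      = A + (N : ℤ) := by
    rw [hfil, Multiset.map_singleton]; exact msMaxD_singleton _
  have hcard : Multiset.card (rectN A B (N + 1)) = N + 1 := card_rectN _ _ _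
  have hch : chainAux (Multiset.card (rectN A B (N + 1)))
      ((rectN A B (N + 1)).erase (A + (N : ℤ), B + (N : ℤ))) (A + (N : ℤ))
      (B + (N : ℤ) - 1) = (N, if A ≤ B - 1 then rectN A (B - 1) N else 0) := by
    rw [hcard, erase_rectN]
    exact chain_rect_s10 A B N (N + 1) (by omega)
  have := mwaStep_spec hx hb1 hch
  rw [this]
  congr 1
  · rw [Prod.mk.injEq]; constructor <;> omega
  · have htr : truncate (A + (N : ℤ), B + (N : ℤ)) =
        if A ≤ B - 1 then ({(A + (N : ℤ), B - 1 + (N : ℤ))} : Multiset (ℤ × ℤ)) else 0 := by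
      have hpair : ((A + (N : ℤ), B + (N : ℤ) - 1) : ℤ × ℤ) = (A + (N : ℤ), B - 1 + (N : ℤ)) := by
        rw [Prod.mk.injEq]; omega
      unfold truncate
      by_cases hAB' : A ≤ B - 1
      · rw [if_pos (by simp; omega), hpair, if_pos hAB']
      · rw [if_neg (by simp; omega), if_neg hAB']
    rw [htr]
    by_cases hAB' : A ≤ B - 1
    · rw [if_pos hAB', if_pos hAB', if_pos hAB']
      rw [Multiset.singleton_add, ← rectN_succ, rectMulti_eq, hN]
    · rw [if_neg hAB', if_neg hAB', if_neg hAB']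
      simp

lemma rectMulti_ne_zero {A B C : ℤ} (hAC : A ≤ C) : rectMulti A B C ≠ 0 := by
  intro h0
  have := congrArg Multiset.card h0
  rw [rectMulti_eq, card_rectN] at this
  simp at this
  omega

lemma mwa_rect_aux {A C : ℤ} (hAC : A ≤ C) :
    ∀ (k : ℕ) (B : ℤ) (fuel : ℕ), A ≤ B → (B - A).toNat = k → k < fuel →
      mwaAux fuel (rectMulti A B C) = rectMulti A C B := by
  intro k
  induction k with
  | zero =>
    intro B fuel hAB hk hfuel
    have hBA : B = A := by omega
    subst hBA
    cases fuel with
    | zero => omega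
    | succ g =>
      rw [mwaAux_succ, if_neg (rectMulti_ne_zero hAC), mwaStep_rect le_rfl hAC,
        if_neg (by omega)]
      rw [mwaAux_zero_arg]
      have h1 : (B - B + 1).toNat = 1 := by omega
      rw [rectMulti_eq, h1]
      show (B, B + C - B) ::ₘ 0 = rectN B C 1
      have : rectN B C 1 = (B + (0 : ℤ), C + (0 : ℤ)) ::ₘ rectN B C 0 := by
        exact_mod_cast rectN_succ B C 0
      rw [this]
      have h2 : rectN B C 0 = 0 := rfl
      rw [h2]
      congr 1
      rw [Prod.mk.injEq]; constructor <;> omega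
  | succ k ih =>
    intro B fuel hAB hk hfuel
    cases fuel with
    | zero => omega
    | succ g =>
      have hAB1 : A ≤ B - 1 := by omega
      rw [mwaAux_succ, if_neg (rectMulti_ne_zero hAC), mwaStep_rect hAB hAC,
        if_pos hAB1]
      rw [ih (B - 1) g hAB1 (by omega) (by omega)]
      have h1 : (B - A + 1).toNat = k + 2 := by omega
      have h2 : (B - 1 - A + 1).toNat = k + 1 := by omega
      rw [rectMulti_eq A C B, h1, rectMulti_eq A C (B - 1), h2]
      have h3 : rectN A C (k + 2) = (A + ((k : ℤ) + 1), C + ((k : ℤ) + 1)) ::ₘ rectN A C (k + 1) := by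
        have := rectN_succ A C (k + 1)
        rw [this]
        congr 2 <;> push_cast <;> ring
      rw [h3]
      congr 1
      rw [Prod.mk.injEq]; constructor <;> omega

lemma msSize_rect_lt {A B C : ℤ} (hAB : A ≤ B) (hAC : A ≤ C) :
    (B - A).toNat < msSize (rectMulti A B C) := by
  rw [msSize, rectMulti_eq, rectN, Multiset.map_map]
  have h1 : Multiset.map ((fun s : ℤ × ℤ => (s.2 + 1 - s.1).toNat) ∘
      fun j : ℕ => (A + (j : ℤ), B + (j : ℤ))) (Multiset.range (C - A + 1).toNat) =
      Multiset.map (fun _ : ℕ => (B - A).toNat + 1) (Multiset.range (C - A + 1).toNat) := by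
    apply Multiset.map_congr rfl
    intro j _
    simp only [Function.comp]
    omega
  rw [h1, Multiset.map_const', Multiset.sum_replicate, Multiset.card_range, smul_eq_mul]
  have : 1 ≤ (C - A + 1).toNat := by omega
  nlinarith

lemma MWA_rect {A B C : ℤ} (hAB : A ≤ B) (hAC : A ≤ C) :
    MWA (rectMulti A B C) = rectMulti A C B :=
  mwa_rect_aux hAC (B - A).toNat B (msSize (rectMulti A B C)) hAB rfl
    (msSize_rect_lt hAB hAC)

end RectComp


section Final

lemma linked_ne {s t : ℤ × ℤ} (h : Linked s t) : s ≠ t := by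
  rintro rfl
  exact h.2.1 (Finset.union_self _)

lemma prec_rect_long {A B C : ℤ} {W : Multiset (ℤ × ℤ)}
    (h : Prec W (rectMulti A C B)) : ∃ s ∈ W, C - A + 1 ≤ s.2 - s.1 := by
  obtain ⟨s, t, rest, hbEq, hlink, hWEq⟩ := h
  have hs : s ∈ rectMulti A C B := by rw [hbEq]; exact Multiset.mem_cons_self _ _
  have ht : t ∈ rectMulti A C B := by
    rw [hbEq]; exact Multiset.mem_cons_of_mem (Multiset.mem_cons_self _ _)
  rw [rectMulti_eq, rectN] at hs ht
  obtain ⟨i, hi, rfl⟩ := Multiset.mem_map.1 hs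
  obtain ⟨j, hj, hfj⟩ := Multiset.mem_map.1 ht
  have hne : (A + (i : ℤ), C + (i : ℤ)) ≠ t := linked_ne hlink
  have hij : (i : ℤ) ≠ (j : ℤ) := by
    intro hEq
    apply hne
    rw [← hfj, hEq]
  refine ⟨(min (A + (i : ℤ), C + (i : ℤ)).1 t.1, max (A + (i : ℤ), C + (i : ℤ)).2 t.2),
    hWEq ▸ Multiset.mem_cons_self _ _, ?_⟩
  rw [← hfj]
  simp only [min_def, max_def]
  split <;> split <;> omega

end Final

theorem mwa_not_lt_of_lt_rectangular
    (A B C D : ℤ) (h : SpehQuad A B C D)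
    (c : Multiset (ℤ × ℤ)) (hc : MLt c (rectMulti A B C)) :
    ¬ MLt (MWA c) (MWA (rectMulti A B C)) := by
  obtain ⟨hAB, hAC, hD⟩ := h
  intro H
  rw [MWA_rect hAB hAC] at H
  have hInv : InvB A C c := mlt_invB hc (rect_invB hAC)
  have hlen : ∀ s ∈ MWA c, s.2 - s.1 ≤ C - A := by
    intro s hs
    rw [MWA] at hs
    exact mwaAux_len hAC (msSize c) c hInv s hs
  have hlong : ∃ s ∈ MWA c, C - A + 1 ≤ s.2 - s.1 := by
    cases H with
    | single h1 => exact prec_rect_long h1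
    | tail h1 h2 => exact mlt_exists_long h1 (prec_rect_long h2)
  obtain ⟨s, hs, h1⟩ := hlong
  have h2 := hlen s hs
  omega
end
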